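/- For every d ≥ 2 and every α > 0 there exists a volume-preserving bi-Lipschitz mapping φ: ℝ^d → ℝ^d mapping α(K_- ∪ Σ_0) onto α(K_- ∪ Σ), where K is the open unit cube in ℝ^d, K_- = K ∩ {x_d < 0}, Σ = K ∩ {x_d = 0}, and Σ_0 = Σ ∩ {x_{d-1} < 0}. -/

import Mathlib

open MeasureTheory Set Pointwise

noncomputable section

namespace HalfCubeAux

def F1 (α a b : ℝ) : ℝ :=
  min (b + α) (min (a/2 + 2*b + 3*α/2) (max (2*a + 2*b + α) a))

def F2 (α a b : ℝ) : ℝ :=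
  min (b/2) (min (-a) (min (2*b + α) (a/4 + b + α/4)))

def G1 (α a b : ℝ) : ℝ :=
  min (a/2 - 2*b - α/2) (min (-b) (max (2*a - 2*b - α) a))

def G2 (α a b : ℝ) : ℝ :=
  max (2*b) (max (a - α) (max (b/2 - α/2) (-a/4 + b - α/4)))

theorem F_R1 (α a b : ℝ) (h1 : 0 ≤ a + 2*b + α) (h2 : 2*a + b ≤ 0) :
    F1 α a b = 2*a + 2*b + α ∧ F2 α a b = b/2 := by
  constructor <;>
  · simp only [F1, F2, min_def, max_def]
    split_ifs <;> linarith

theorem F_R2 (α a b : ℝ) (h1 : 0 ≤ a + 2*b + α) (h2 : 0 ≤ 2*a + b) :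
    F1 α a b = b + α ∧ F2 α a b = -a := by
  constructor <;>
  · simp only [F1, F2, min_def, max_def]
    split_ifs <;> linarith

theorem F_R4 (α a b : ℝ) (h1 : a + 2*b + α ≤ 0) (h3 : 0 ≤ a - 4*b - 3*α) :
    F1 α a b = a/2 + 2*b + 3*α/2 ∧ F2 α a b = 2*b + α := by
  constructor <;>
  · simp only [F1, F2, min_def, max_def]
    split_ifs <;> linarith

theorem F_R5 (α a b : ℝ) (h1 : a + 2*b + α ≤ 0) (h3 : a - 4*b - 3*α ≤ 0) :
    F1 α a b = a ∧ F2 α a b = a/4 + b + α/4 := by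
  constructor <;>
  · simp only [F1, F2, min_def, max_def]
    split_ifs <;> linarith

theorem G_S1 (α a b : ℝ) (h1 : 0 ≤ a + 4*b + α) (h2 : a - 2*b - α ≤ 0) :
    G1 α a b = a/2 - 2*b - α/2 ∧ G2 α a b = 2*b := by
  constructor <;>
  · simp only [G1, G2, min_def, max_def]
    split_ifs <;> linarith

theorem G_S2 (α a b : ℝ) (h2 : 0 ≤ a - 2*b - α) (h3 : 0 ≤ 2*a - b - α) :
    G1 α a b = -b ∧ G2 α a b = a - α := by
  constructor <;>
  · simp only [G1, G2, min_def, max_def]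
    split_ifs <;> linarith

theorem G_S4 (α a b : ℝ) (h3 : 2*a - b - α ≤ 0) (h2 : 0 ≤ a - 2*b - α) :
    G1 α a b = 2*a - 2*b - α ∧ G2 α a b = b/2 - α/2 := by
  constructor <;>
  · simp only [G1, G2, min_def, max_def]
    split_ifs <;> linarith

theorem G_S5 (α a b : ℝ) (h2 : a - 2*b - α ≤ 0) (h1 : a + 4*b + α ≤ 0) :
    G1 α a b = a ∧ G2 α a b = -a/4 + b - α/4 := by
  constructor <;>
  · simp only [G1, G2, min_def, max_def]
    split_ifs <;> linarith

theorem GF (α a b : ℝ) : G1 α (F1 α a b) (F2 α a b) = a ∧ G2 α (F1 α a b) (F2 α a b) = b := by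
  rcases le_total 0 (a + 2*b + α) with h1 | h1
  · rcases le_total (2*a + b) 0 with h2 | h2
    · obtain ⟨e1, e2⟩ := F_R1 α a b h1 h2
      rw [e1, e2]
      obtain ⟨f1, f2⟩ := G_S1 α (2*a+2*b+α) (b/2) (by linarith) (by linarith)
      rw [f1, f2]; constructor <;> ring
    · obtain ⟨e1, e2⟩ := F_R2 α a b h1 h2
      rw [e1, e2]
      obtain ⟨f1, f2⟩ := G_S2 α (b+α) (-a) (by linarith) (by linarith)
      rw [f1, f2]; constructor <;> ring
  · rcases le_total 0 (a - 4*b - 3*α) with h3 | h3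
    · obtain ⟨e1, e2⟩ := F_R4 α a b h1 h3
      rw [e1, e2]
      obtain ⟨f1, f2⟩ := G_S4 α (a/2+2*b+3*α/2) (2*b+α) (by linarith) (by linarith)
      rw [f1, f2]; constructor <;> ring
    · obtain ⟨e1, e2⟩ := F_R5 α a b h1 h3
      rw [e1, e2]
      obtain ⟨f1, f2⟩ := G_S5 α a (a/4+b+α/4) (by linarith) (by linarith)
      rw [f1, f2]; constructor <;> ring

theorem FG (α a b : ℝ) : F1 α (G1 α a b) (G2 α a b) = a ∧ F2 α (G1 α a b) (G2 α a b) = b := by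
  rcases le_total 0 (a - 2*b - α) with h2 | h2
  · rcases le_total 0 (2*a - b - α) with h3 | h3
    · obtain ⟨e1, e2⟩ := G_S2 α a b h2 h3
      rw [e1, e2]
      obtain ⟨f1, f2⟩ := F_R2 α (-b) (a-α) (by linarith) (by linarith)
      rw [f1, f2]; constructor <;> ring
    · obtain ⟨e1, e2⟩ := G_S4 α a b h3 h2
      rw [e1, e2]
      obtain ⟨f1, f2⟩ := F_R4 α (2*a-2*b-α) (b/2-α/2) (by linarith) (by linarith)
      rw [f1, f2]; constructor <;> ring
  · rcases le_total 0 (a + 4*b + α) with h1 | h1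
    · obtain ⟨e1, e2⟩ := G_S1 α a b h1 h2
      rw [e1, e2]
      obtain ⟨f1, f2⟩ := F_R1 α (a/2-2*b-α/2) (2*b) (by linarith) (by linarith)
      rw [f1, f2]; constructor <;> ring
    · obtain ⟨e1, e2⟩ := G_S5 α a b h2 h1
      rw [e1, e2]
      obtain ⟨f1, f2⟩ := F_R5 α a (-a/4+b-α/4) (by linarith) (by linarith)
      rw [f1, f2]; constructor <;> ring

theorem key2d {α : ℝ} (hα : 0 < α) (a b : ℝ) :
    (|a| < α ∧ |b| < α ∧ (b < 0 ∨ (b = 0 ∧ a < 0))) ↔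
      (|F1 α a b| < α ∧ |F2 α a b| < α ∧ F2 α a b ≤ 0) := by
  rcases le_total 0 (a + 2*b + α) with h1 | h1
  · rcases le_total (2*a + b) 0 with h2 | h2
    · obtain ⟨e1, e2⟩ := F_R1 α a b h1 h2
      simp only [e1, e2, abs_lt]
      constructor
      · rintro ⟨⟨ha1, ha2⟩, ⟨hb1, hb2⟩, hd | ⟨rfl, ha'⟩⟩
        · exact ⟨⟨by linarith, by linarith⟩, ⟨by linarith, by linarith⟩, by linarith⟩
        · exact ⟨⟨by linarith, by linarith⟩, ⟨by linarith, by linarith⟩, by linarith⟩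
      · rintro ⟨⟨hf1, hf2⟩, ⟨hg1, hg2⟩, hg3⟩
        have hb1 : b ≤ 0 := by linarith
        have hb2 : -α < b := by linarith
        rcases lt_or_eq_of_le hb1 with hb | rfl
        · exact ⟨⟨by linarith, by linarith⟩, ⟨hb2, by linarith⟩, Or.inl hb⟩
        · exact ⟨⟨by linarith, by linarith⟩, ⟨hb2, by linarith⟩, Or.inr ⟨rfl, by linarith⟩⟩
    · obtain ⟨e1, e2⟩ := F_R2 α a b h1 h2
      simp only [e1, e2, abs_lt]
      constructor
      · rintro ⟨⟨ha1, ha2⟩, ⟨hb1, hb2⟩, hd | ⟨rfl, ha'⟩⟩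
        · exact ⟨⟨by linarith, by linarith⟩, ⟨by linarith, by linarith⟩, by linarith⟩
        · exact absurd h2 (by linarith)
      · rintro ⟨⟨hf1, hf2⟩, ⟨hg1, hg2⟩, hg3⟩
        exact ⟨⟨by linarith, by linarith⟩, ⟨by linarith, by linarith⟩, Or.inl (by linarith)⟩
  · rcases le_total 0 (a - 4*b - 3*α) with h3 | h3
    · obtain ⟨e1, e2⟩ := F_R4 α a b h1 h3
      simp only [e1, e2, abs_lt]
      constructor
      · rintro ⟨⟨ha1, ha2⟩, ⟨hb1, hb2⟩, hd | ⟨rfl, ha'⟩⟩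
        · exact ⟨⟨by linarith, by linarith⟩, ⟨by linarith, by linarith⟩, by linarith⟩
        · exact absurd h1 (by linarith)
      · rintro ⟨⟨hf1, hf2⟩, ⟨hg1, hg2⟩, hg3⟩
        exact ⟨⟨by linarith, by linarith⟩, ⟨by linarith, by linarith⟩, Or.inl (by linarith)⟩
    · obtain ⟨e1, e2⟩ := F_R5 α a b h1 h3
      simp only [e1, e2, abs_lt]
      constructor
      · rintro ⟨⟨ha1, ha2⟩, ⟨hb1, hb2⟩, hd | ⟨rfl, ha'⟩⟩
        · exact ⟨⟨by linarith, by linarith⟩, ⟨by linarith, by linarith⟩, by linarith⟩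
        · exact absurd h1 (by linarith)
      · rintro ⟨⟨hf1, hf2⟩, ⟨hg1, hg2⟩, hg3⟩
        exact ⟨⟨by linarith, by linarith⟩, ⟨by linarith, by linarith⟩, Or.inl (by linarith)⟩


private theorem lin_abs (c1 c2 x y : ℝ) : |c1*x + c2*y| ≤ |c1| * |x| + |c2| * |y| :=
  (abs_add_le _ _).trans (by rw [abs_mul, abs_mul])

theorem F1_lip (α a b a' b' : ℝ) : |F1 α a b - F1 α a' b'| ≤ 2*|a-a'| + 2*|b-b'| := by
  have k0 : (0:ℝ) ≤ |a-a'| := abs_nonneg _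
  have k0' : (0:ℝ) ≤ |b-b'| := abs_nonneg _
  have e1 : |(b + α) - (b' + α)| ≤ 2*|a-a'| + 2*|b-b'| := by
    rw [show (b + α) - (b' + α) = b - b' by ring]; linarith
  have e2 : |(a/2 + 2*b + 3*α/2) - (a'/2 + 2*b' + 3*α/2)| ≤ 2*|a-a'| + 2*|b-b'| := by
    rw [show (a/2 + 2*b + 3*α/2) - (a'/2 + 2*b' + 3*α/2) = (1/2)*(a-a') + 2*(b-b') by ring]
    have := lin_abs (1/2) 2 (a-a') (b-b')
    rw [show |(1:ℝ)/2| = 1/2 by norm_num, show |(2:ℝ)| = 2 by norm_num] at this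
    linarith
  have e3 : |(2*a + 2*b + α) - (2*a' + 2*b' + α)| ≤ 2*|a-a'| + 2*|b-b'| := by
    rw [show (2*a + 2*b + α) - (2*a' + 2*b' + α) = 2*(a-a') + 2*(b-b') by ring]
    have := lin_abs 2 2 (a-a') (b-b')
    rw [show |(2:ℝ)| = 2 by norm_num] at this
    linarith
  have e4 : |a - a'| ≤ 2*|a-a'| + 2*|b-b'| := by linarith
  have m1 := (abs_max_sub_max_le_max (2*a + 2*b + α) a (2*a' + 2*b' + α) a').trans (max_le e3 e4)
  have m2 := (abs_min_sub_min_le_max (a/2 + 2*b + 3*α/2) (max (2*a + 2*b + α) a)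
    (a'/2 + 2*b' + 3*α/2) (max (2*a' + 2*b' + α) a')).trans (max_le e2 m1)
  exact (abs_min_sub_min_le_max _ _ _ _).trans (max_le e1 m2)

theorem F2_lip (α a b a' b' : ℝ) : |F2 α a b - F2 α a' b'| ≤ 2*|a-a'| + 2*|b-b'| := by
  have k0 : (0:ℝ) ≤ |a-a'| := abs_nonneg _
  have k0' : (0:ℝ) ≤ |b-b'| := abs_nonneg _
  have e1 : |b/2 - b'/2| ≤ 2*|a-a'| + 2*|b-b'| := by
    rw [show b/2 - b'/2 = (1/2)*(b-b') + 0*(a-a') by ring]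
    have := lin_abs (1/2) 0 (b-b') (a-a')
    rw [show |(1:ℝ)/2| = 1/2 by norm_num, show |(0:ℝ)| = 0 by norm_num] at this
    linarith
  have e2 : |(-a) - (-a')| ≤ 2*|a-a'| + 2*|b-b'| := by
    rw [show (-a) - (-a') = -(a - a') by ring, abs_neg]; linarith
  have e3 : |(2*b + α) - (2*b' + α)| ≤ 2*|a-a'| + 2*|b-b'| := by
    rw [show (2*b + α) - (2*b' + α) = 2*(b-b') by ring, abs_mul,
      show |(2:ℝ)| = 2 by norm_num]
    linarith
  have e4 : |(a/4 + b + α/4) - (a'/4 + b' + α/4)| ≤ 2*|a-a'| + 2*|b-b'| := by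
    rw [show (a/4 + b + α/4) - (a'/4 + b' + α/4) = (1/4)*(a-a') + 1*(b-b') by ring]
    have := lin_abs (1/4) 1 (a-a') (b-b')
    rw [show |(1:ℝ)/4| = 1/4 by norm_num, show |(1:ℝ)| = 1 by norm_num] at this
    linarith
  have m1 := (abs_min_sub_min_le_max (2*b + α) (a/4 + b + α/4)
    (2*b' + α) (a'/4 + b' + α/4)).trans (max_le e3 e4)
  have m2 := (abs_min_sub_min_le_max (-a) _ (-a') _).trans (max_le e2 m1)
  exact (abs_min_sub_min_le_max _ _ _ _).trans (max_le e1 m2)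

theorem G1_lip (α a b a' b' : ℝ) : |G1 α a b - G1 α a' b'| ≤ 2*|a-a'| + 2*|b-b'| := by
  have k0 : (0:ℝ) ≤ |a-a'| := abs_nonneg _
  have k0' : (0:ℝ) ≤ |b-b'| := abs_nonneg _
  have e1 : |(a/2 - 2*b - α/2) - (a'/2 - 2*b' - α/2)| ≤ 2*|a-a'| + 2*|b-b'| := by
    rw [show (a/2 - 2*b - α/2) - (a'/2 - 2*b' - α/2) = (1/2)*(a-a') + (-2)*(b-b') by ring]
    have := lin_abs (1/2) (-2) (a-a') (b-b')
    rw [show |(1:ℝ)/2| = 1/2 by norm_num, show |(-2:ℝ)| = 2 by norm_num] at this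
    linarith
  have e2 : |(-b) - (-b')| ≤ 2*|a-a'| + 2*|b-b'| := by
    rw [show (-b) - (-b') = -(b - b') by ring, abs_neg]; linarith
  have e3 : |(2*a - 2*b - α) - (2*a' - 2*b' - α)| ≤ 2*|a-a'| + 2*|b-b'| := by
    rw [show (2*a - 2*b - α) - (2*a' - 2*b' - α) = 2*(a-a') + (-2)*(b-b') by ring]
    have := lin_abs 2 (-2) (a-a') (b-b')
    rw [show |(2:ℝ)| = 2 by norm_num, show |(-2:ℝ)| = 2 by norm_num] at this
    linarith
  have e4 : |a - a'| ≤ 2*|a-a'| + 2*|b-b'| := by linarith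
  have m1 := (abs_max_sub_max_le_max (2*a - 2*b - α) a (2*a' - 2*b' - α) a').trans (max_le e3 e4)
  have m2 := (abs_min_sub_min_le_max (-b) _ (-b') _).trans (max_le e2 m1)
  exact (abs_min_sub_min_le_max _ _ _ _).trans (max_le e1 m2)

theorem G2_lip (α a b a' b' : ℝ) : |G2 α a b - G2 α a' b'| ≤ 2*|a-a'| + 2*|b-b'| := by
  have k0 : (0:ℝ) ≤ |a-a'| := abs_nonneg _
  have k0' : (0:ℝ) ≤ |b-b'| := abs_nonneg _
  have e1 : |2*b - 2*b'| ≤ 2*|a-a'| + 2*|b-b'| := by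
    rw [show 2*b - 2*b' = 2*(b-b') by ring, abs_mul, show |(2:ℝ)| = 2 by norm_num]
    linarith
  have e2 : |(a - α) - (a' - α)| ≤ 2*|a-a'| + 2*|b-b'| := by
    rw [show (a - α) - (a' - α) = a - a' by ring]; linarith
  have e3 : |(b/2 - α/2) - (b'/2 - α/2)| ≤ 2*|a-a'| + 2*|b-b'| := by
    rw [show (b/2 - α/2) - (b'/2 - α/2) = (1/2)*(b-b') by ring, abs_mul,
      show |(1:ℝ)/2| = 1/2 by norm_num]
    linarith
  have e4 : |(-a/4 + b - α/4) - (-a'/4 + b' - α/4)| ≤ 2*|a-a'| + 2*|b-b'| := by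
    rw [show (-a/4 + b - α/4) - (-a'/4 + b' - α/4) = (-1/4)*(a-a') + 1*(b-b') by ring]
    have := lin_abs (-1/4) 1 (a-a') (b-b')
    rw [show |(-1:ℝ)/4| = 1/4 by norm_num, show |(1:ℝ)| = 1 by norm_num] at this
    linarith
  have m1 := (abs_max_sub_max_le_max (b/2 - α/2) (-a/4 + b - α/4)
    (b'/2 - α/2) (-a'/4 + b' - α/4)).trans (max_le e3 e4)
  have m2 := (abs_max_sub_max_le_max (a - α) _ (a' - α) _).trans (max_le e2 m1)
  exact (abs_max_sub_max_le_max _ _ _ _).trans (max_le e1 m2)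


variable (e : ℕ) (α : ℝ)

abbrev E (e : ℕ) := EuclideanSpace ℝ (Fin (e+2))

def iu : Fin (e+2) := ⟨e, by omega⟩
def iv : Fin (e+2) := ⟨e+1, by omega⟩

theorem iu_ne_iv : iu e ≠ iv e := by simp [iu, iv]

theorem iu_lt_iv : iu e < iv e := by simp [iu, iv, Fin.lt_def]

def phi (x : E e) : E e := WithLp.toLp 2 fun i =>
  if i = iu e then F1 α (x (iu e)) (x (iv e))
  else if i = iv e then F2 α (x (iu e)) (x (iv e)) else x i

def psi (x : E e) : E e := WithLp.toLp 2 fun i =>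
  if i = iu e then G1 α (x (iu e)) (x (iv e))
  else if i = iv e then G2 α (x (iu e)) (x (iv e)) else x i

theorem phi_apply_iu (x : E e) : phi e α x (iu e) = F1 α (x (iu e)) (x (iv e)) := if_pos rfl

theorem phi_apply_iv (x : E e) : phi e α x (iv e) = F2 α (x (iu e)) (x (iv e)) := by
  rw [phi, WithLp.ofLp_toLp, if_neg (Ne.symm (iu_ne_iv e) : iv e ≠ iu e), if_pos rfl]

theorem phi_apply_ne (x : E e) {i : Fin (e+2)} (h1 : i ≠ iu e) (h2 : i ≠ iv e) :
    phi e α x i = x i := by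
  rw [phi, WithLp.ofLp_toLp, if_neg h1, if_neg h2]

theorem psi_apply_iu (x : E e) : psi e α x (iu e) = G1 α (x (iu e)) (x (iv e)) := if_pos rfl

theorem psi_apply_iv (x : E e) : psi e α x (iv e) = G2 α (x (iu e)) (x (iv e)) := by
  rw [psi, WithLp.ofLp_toLp, if_neg (Ne.symm (iu_ne_iv e) : iv e ≠ iu e), if_pos rfl]

theorem psi_apply_ne (x : E e) {i : Fin (e+2)} (h1 : i ≠ iu e) (h2 : i ≠ iv e) :
    psi e α x i = x i := by
  rw [psi, WithLp.ofLp_toLp, if_neg h1, if_neg h2]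

theorem psi_phi (x : E e) : psi e α (phi e α x) = x := by
  ext i
  by_cases h1 : i = iu e
  · subst h1
    rw [psi_apply_iu, phi_apply_iu, phi_apply_iv]
    exact (GF α (x (iu e)) (x (iv e))).1
  · by_cases h2 : i = iv e
    · subst h2
      rw [psi_apply_iv, phi_apply_iu, phi_apply_iv]
      exact (GF α (x (iu e)) (x (iv e))).2
    · rw [psi_apply_ne e α _ h1 h2, phi_apply_ne e α _ h1 h2]

theorem phi_psi (x : E e) : phi e α (psi e α x) = x := by
  ext i
  by_cases h1 : i = iu e
  · subst h1
    rw [phi_apply_iu, psi_apply_iu, psi_apply_iv]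
    exact (FG α (x (iu e)) (x (iv e))).1
  · by_cases h2 : i = iv e
    · subst h2
      rw [phi_apply_iv, psi_apply_iu, psi_apply_iv]
      exact (FG α (x (iu e)) (x (iv e))).2
    · rw [phi_apply_ne e α _ h1 h2, psi_apply_ne e α _ h1 h2]

theorem sum_split (g : Fin (e+2) → ℝ) :
    ∑ i, g i = g (iu e) + (g (iv e) + ∑ i ∈ (Finset.univ.erase (iu e)).erase (iv e), g i) := by
  rw [← Finset.add_sum_erase _ g (Finset.mem_univ (iu e)),
    ← Finset.add_sum_erase _ g
      (Finset.mem_erase.mpr ⟨(iu_ne_iv e).symm, Finset.mem_univ _⟩)]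

theorem lip_aux (x y : E e)
    (hF1 : |F1 α (x (iu e)) (x (iv e)) - F1 α (y (iu e)) (y (iv e))| ≤
      2*|x (iu e) - y (iu e)| + 2*|x (iv e) - y (iv e)|)
    (hF2 : |F2 α (x (iu e)) (x (iv e)) - F2 α (y (iu e)) (y (iv e))| ≤
      2*|x (iu e) - y (iu e)| + 2*|x (iv e) - y (iv e)|) :
    ∑ i, (phi e α x i - phi e α y i)^2 ≤ 16 * ∑ i, (x i - y i)^2 := by
  rw [sum_split, sum_split e (fun i => (x i - y i)^2)]
  set s := (Finset.univ.erase (iu e)).erase (iv e)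
  have hterm : ∑ i ∈ s, (phi e α x i - phi e α y i)^2 = ∑ i ∈ s, (x i - y i)^2 := by
    refine Finset.sum_congr rfl fun i hi => ?_
    have hmem := Finset.mem_erase.mp hi
    have h2 : i ≠ iv e := hmem.1
    have h1 : i ≠ iu e := (Finset.mem_erase.mp hmem.2).1
    rw [phi_apply_ne e α x h1 h2, phi_apply_ne e α y h1 h2]
  rw [hterm]
  have hS : (0:ℝ) ≤ ∑ i ∈ s, (x i - y i)^2 :=
    Finset.sum_nonneg fun i _ => sq_nonneg _
  rw [phi_apply_iu, phi_apply_iu, phi_apply_iv, phi_apply_iv]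
  set A := F1 α (x (iu e)) (x (iv e)) - F1 α (y (iu e)) (y (iv e)) with hA
  set B := F2 α (x (iu e)) (x (iv e)) - F2 α (y (iu e)) (y (iv e)) with hB
  set u := x (iu e) - y (iu e)
  set v := x (iv e) - y (iv e)
  have h1 : A^2 ≤ (2*|u| + 2*|v|)^2 := by
    rw [← sq_abs A]
    exact pow_le_pow_left₀ (abs_nonneg _) hF1 2
  have h2 : B^2 ≤ (2*|u| + 2*|v|)^2 := by
    rw [← sq_abs B]
    exact pow_le_pow_left₀ (abs_nonneg _) hF2 2
  have hu : |u|^2 = u^2 := sq_abs u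
  have hv : |v|^2 = v^2 := sq_abs v
  have key : (2*|u| + 2*|v|)^2 ≤ 8*u^2 + 8*v^2 := by
    nlinarith [sq_nonneg (|u| - |v|), sq_abs u, sq_abs v]
  have exp1 : (F1 α (x (iu e)) (x (iv e)) - F1 α (y (iu e)) (y (iv e))) = A := rfl
  nlinarith [h1, h2, key, hS]

theorem phi_lipschitz : LipschitzWith 4 (phi e α) := by
  apply LipschitzWith.of_dist_le_mul
  intro x y
  rw [EuclideanSpace.dist_eq, EuclideanSpace.dist_eq]
  have key := lip_aux e α x y (F1_lip _ _ _ _ _) (F2_lip _ _ _ _ _)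
  simp only [Real.dist_eq, sq_abs]
  have h16 : Real.sqrt (16 * ∑ i, (x i - y i)^2) =
      4 * Real.sqrt (∑ i, (x i - y i)^2) := by
    rw [show (16:ℝ) = 4^2 by norm_num, Real.sqrt_mul (by positivity) _, Real.sqrt_sq (by norm_num)]
  refine le_trans (Real.sqrt_le_sqrt key) ?_
  rw [h16]
  norm_num


theorem lip_aux_psi (x y : E e)
    (hG1 : |G1 α (x (iu e)) (x (iv e)) - G1 α (y (iu e)) (y (iv e))| ≤
      2*|x (iu e) - y (iu e)| + 2*|x (iv e) - y (iv e)|)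
    (hG2 : |G2 α (x (iu e)) (x (iv e)) - G2 α (y (iu e)) (y (iv e))| ≤
      2*|x (iu e) - y (iu e)| + 2*|x (iv e) - y (iv e)|) :
    ∑ i, (psi e α x i - psi e α y i)^2 ≤ 16 * ∑ i, (x i - y i)^2 := by
  rw [sum_split, sum_split e (fun i => (x i - y i)^2)]
  set s := (Finset.univ.erase (iu e)).erase (iv e)
  have hterm : ∑ i ∈ s, (psi e α x i - psi e α y i)^2 = ∑ i ∈ s, (x i - y i)^2 := by
    refine Finset.sum_congr rfl fun i hi => ?_
    have hmem := Finset.mem_erase.mp hi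
    have h2 : i ≠ iv e := hmem.1
    have h1 : i ≠ iu e := (Finset.mem_erase.mp hmem.2).1
    rw [psi_apply_ne e α x h1 h2, psi_apply_ne e α y h1 h2]
  rw [hterm]
  have hS : (0:ℝ) ≤ ∑ i ∈ s, (x i - y i)^2 :=
    Finset.sum_nonneg fun i _ => sq_nonneg _
  rw [psi_apply_iu, psi_apply_iu, psi_apply_iv, psi_apply_iv]
  set A := G1 α (x (iu e)) (x (iv e)) - G1 α (y (iu e)) (y (iv e)) with hA
  set B := G2 α (x (iu e)) (x (iv e)) - G2 α (y (iu e)) (y (iv e)) with hB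
  set u := x (iu e) - y (iu e)
  set v := x (iv e) - y (iv e)
  have h1 : A^2 ≤ (2*|u| + 2*|v|)^2 := by
    rw [← sq_abs A]
    exact pow_le_pow_left₀ (abs_nonneg _) hG1 2
  have h2 : B^2 ≤ (2*|u| + 2*|v|)^2 := by
    rw [← sq_abs B]
    exact pow_le_pow_left₀ (abs_nonneg _) hG2 2
  have key : (2*|u| + 2*|v|)^2 ≤ 8*u^2 + 8*v^2 := by
    nlinarith [sq_nonneg (|u| - |v|), sq_abs u, sq_abs v]
  nlinarith [h1, h2, key, hS]

theorem psi_lipschitz : LipschitzWith 4 (psi e α) := by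
  apply LipschitzWith.of_dist_le_mul
  intro x y
  rw [EuclideanSpace.dist_eq, EuclideanSpace.dist_eq]
  have key := lip_aux_psi e α x y (G1_lip _ _ _ _ _) (G2_lip _ _ _ _ _)
  simp only [Real.dist_eq, sq_abs]
  have h16 : Real.sqrt (16 * ∑ i, (x i - y i)^2) =
      4 * Real.sqrt (∑ i, (x i - y i)^2) := by
    rw [show (16:ℝ) = 4^2 by norm_num, Real.sqrt_mul (by positivity) _, Real.sqrt_sq (by norm_num)]
  refine le_trans (Real.sqrt_le_sqrt key) ?_
  rw [h16]
  norm_num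

/-- linear map acting on the (iu, iv) coordinates by a 2×2 matrix -/
def Lmat (m11 m12 m21 m22 : ℝ) : E e →ₗ[ℝ] E e where
  toFun x := WithLp.toLp 2 fun i =>
    if i = iu e then m11 * x (iu e) + m12 * x (iv e)
    else if i = iv e then m21 * x (iu e) + m22 * x (iv e) else x i
  map_add' x y := by
    ext i
    by_cases h1 : i = iu e
    · subst h1; simp [PiLp.add_apply]; ring
    · by_cases h2 : i = iv e
      · subst h2; simp [PiLp.add_apply, h1]; ring
      · simp [PiLp.add_apply, h1, h2]
  map_smul' c x := by
    ext i
    by_cases h1 : i = iu e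
    · subst h1; simp [PiLp.smul_apply, smul_eq_mul]; ring
    · by_cases h2 : i = iv e
      · subst h2; simp [PiLp.smul_apply, smul_eq_mul, h1]; ring
      · simp [PiLp.smul_apply, smul_eq_mul, h1, h2]

theorem Lmat_apply (m11 m12 m21 m22 : ℝ) (x : E e) (i : Fin (e+2)) :
    Lmat e m11 m12 m21 m22 x i =
      if i = iu e then m11 * x (iu e) + m12 * x (iv e)
      else if i = iv e then m21 * x (iu e) + m22 * x (iv e) else x i := rfl

theorem Lmat_entry (m11 m12 m21 m22 : ℝ) (i j : Fin (e+2)) :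
    LinearMap.toMatrix (PiLp.basisFun 2 ℝ (Fin (e+2))) (PiLp.basisFun 2 ℝ (Fin (e+2)))
      (Lmat e m11 m12 m21 m22) i j =
      if i = iu e then (if j = iu e then m11 else if j = iv e then m12 else 0)
      else if i = iv e then (if j = iu e then m21 else if j = iv e then m22 else 0)
      else (if i = j then 1 else 0) := by
  classical
  have h2ne : ¬ (iv e = iu e) := Ne.symm (iu_ne_iv e)
  have h1ne : ¬ (iu e = iv e) := iu_ne_iv e
  rw [LinearMap.toMatrix_apply, PiLp.basisFun_repr, PiLp.basisFun_apply, Lmat_apply]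
  simp only [PiLp.single_apply, Pi.single_apply]
  by_cases h1 : i = iu e
  · subst h1
    by_cases hj1 : j = iu e
    · subst hj1; simp [h1ne, h2ne]
    · by_cases hj2 : j = iv e
      · subst hj2; simp [h1ne, h2ne]
      · simp [Ne.symm hj1, Ne.symm hj2, hj1, hj2]
  · by_cases h2 : i = iv e
    · subst h2
      by_cases hj1 : j = iu e
      · subst hj1; simp [h1ne, h2ne]
      · by_cases hj2 : j = iv e
        · subst hj2; simp [h1ne, h2ne]
        · simp [h2ne, Ne.symm hj1, Ne.symm hj2, hj1, hj2]
    · simp only [h1, h2, if_false]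

theorem prod_two_special (f : Fin (e+2) → ℝ) (c1 c2 : ℝ)
    (hu : f (iu e) = c1) (hv : f (iv e) = c2)
    (hother : ∀ i, i ≠ iu e → i ≠ iv e → f i = 1) :
    ∏ i, f i = c1 * c2 := by
  rw [← Finset.mul_prod_erase _ f (Finset.mem_univ (iu e)),
    ← Finset.mul_prod_erase _ f
      (Finset.mem_erase.mpr ⟨(iu_ne_iv e).symm, Finset.mem_univ _⟩),
    Finset.prod_eq_one (fun i hi => by
      have h2 := Finset.mem_erase.mp hi
      exact hother i (Finset.mem_erase.mp h2.2).1 h2.1), hu, hv, mul_one]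

theorem det_Lmat_upper (m11 m22 m12 : ℝ) :
    LinearMap.det (Lmat e m11 m12 0 m22) = m11 * m22 := by
  classical
  rw [← LinearMap.det_toMatrix (PiLp.basisFun 2 ℝ (Fin (e+2)))]
  rw [Matrix.det_of_upperTriangular (by
    intro i j hij
    rw [Lmat_entry]
    have hij' : (j:ℕ) < (i:ℕ) := hij
    have hne : j ≠ i := fun h => by subst h; exact lt_irrefl _ hij'
    by_cases h1 : i = iu e
    · have hj1 : j ≠ iu e := fun h => hne (h.trans h1.symm)
      have hj2 : j ≠ iv e := by
        intro h
        subst h h1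
        have := iu_lt_iv e
        simp only [Fin.lt_def] at this hij'
        omega
      simp [h1, hj1, hj2]
    · by_cases h2 : i = iv e
      · have hj2 : j ≠ iv e := fun h => hne (h.trans h2.symm)
        by_cases hj1 : j = iu e
        · simp [h1, h2, hj1, Ne.symm (iu_ne_iv e)]
        · simp [h1, h2, hj1, hj2]
      · simp [h1, h2, Ne.symm hne])]
  exact prod_two_special e _ m11 m22
    (by rw [Lmat_entry]; simp)
    (by rw [Lmat_entry]; simp [Ne.symm (iu_ne_iv e)])
    (fun i hi1 hi2 => by rw [Lmat_entry]; simp [hi1, hi2])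

theorem det_Lmat_lower (m11 m22 m21 : ℝ) :
    LinearMap.det (Lmat e m11 0 m21 m22) = m11 * m22 := by
  classical
  rw [← LinearMap.det_toMatrix (PiLp.basisFun 2 ℝ (Fin (e+2)))]
  rw [Matrix.det_of_lowerTriangular _ (by
    intro i j hij
    rw [Lmat_entry]
    have hij' : (i:ℕ) < (j:ℕ) := hij
    have hne : j ≠ i := fun h => by subst h; exact lt_irrefl _ hij'
    by_cases h1 : i = iu e
    · have hj1 : j ≠ iu e := fun h => hne (h.trans h1.symm)
      by_cases hj2 : j = iv e
      · simp [h1, hj1, hj2, Ne.symm (iu_ne_iv e)]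
      · simp [h1, hj1, hj2]
    · by_cases h2 : i = iv e
      · have hj2 : j ≠ iv e := fun h => hne (h.trans h2.symm)
        have hj1 : j ≠ iu e := by
          intro h
          subst h h2
          have := iu_lt_iv e
          simp only [Fin.lt_def] at this hij'
          omega
        simp [h1, h2, hj1, hj2]
      · simp [h1, h2, Ne.symm hne])]
  exact prod_two_special e _ m11 m22
    (by rw [Lmat_entry]; simp)
    (by rw [Lmat_entry]; simp [Ne.symm (iu_ne_iv e)])
    (fun i hi1 hi2 => by rw [Lmat_entry]; simp [hi1, hi2])

theorem Lmat_rot_comp :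
    (Lmat e 0 1 (-1) 0).comp (Lmat e 0 1 (-1) 0) = Lmat e (-1) 0 0 (-1) := by
  have h2ne : ¬ (iv e = iu e) := Ne.symm (iu_ne_iv e)
  apply LinearMap.ext
  intro x
  ext i
  simp only [LinearMap.comp_apply, Lmat_apply]
  by_cases h1 : i = iu e
  · subst h1; simp [h2ne]
  · by_cases h2 : i = iv e
    · subst h2; simp [h2ne]
    · simp [h1, h2]

theorem abs_det_Lmat_rot : |LinearMap.det (Lmat e 0 1 (-1) 0)| = 1 := by
  have h : LinearMap.det (Lmat e 0 1 (-1) 0) * LinearMap.det (Lmat e 0 1 (-1) 0) = 1 := by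
    rw [← LinearMap.det_comp, Lmat_rot_comp, det_Lmat_upper]
    norm_num
  rcases mul_self_eq_one_iff.mp h with h' | h' <;> rw [h'] <;> norm_num


/-- linear functional -/
def Lfun (c1 c2 : ℝ) : E e →ₗ[ℝ] ℝ where
  toFun x := c1 * x (iu e) + c2 * x (iv e)
  map_add' x y := by simp [PiLp.add_apply]; ring
  map_smul' c x := by simp [PiLp.smul_apply, smul_eq_mul]; ring

theorem line_null (c1 c2 c3 : ℝ) (h : ¬(c1 = 0 ∧ c2 = 0)) :
    volume {x : E e | c1 * x (iu e) + c2 * x (iv e) = c3} = 0 := by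
  classical
  set l := Lfun e c1 c2 with hl
  have hker : LinearMap.ker l ≠ ⊤ := by
    intro htop
    set w : E e := EuclideanSpace.single (iu e) c1 + EuclideanSpace.single (iv e) c2 with hw
    have hmem : w ∈ LinearMap.ker l := by rw [htop]; trivial
    rw [LinearMap.mem_ker] at hmem
    have hval : l w = c1 * c1 + c2 * c2 := by
      simp [hl, Lfun, hw, PiLp.add_apply, EuclideanSpace.single_apply,
        iu_ne_iv e, Ne.symm (iu_ne_iv e)]
    rw [hval] at hmem
    exact h ⟨by nlinarith, by nlinarith⟩
  have hker0 : volume ((LinearMap.ker l : Submodule ℝ (E e)) : Set (E e)) = 0 :=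
    Measure.addHaar_submodule _ _ hker
  rcases eq_empty_or_nonempty {x : E e | c1 * x (iu e) + c2 * x (iv e) = c3} with hS | ⟨x₀, hx₀⟩
  · rw [hS]; simp
  · have hx₀' : c1 * x₀ (iu e) + c2 * x₀ (iv e) = c3 := hx₀
    have hSeq : {x : E e | c1 * x (iu e) + c2 * x (iv e) = c3} =
        (fun z : E e => -x₀ + z) ⁻¹' ((LinearMap.ker l : Submodule ℝ (E e)) : Set (E e)) := by
      ext z
      simp only [mem_setOf_eq, mem_preimage, SetLike.mem_coe, LinearMap.mem_ker]
      have hlz : l (-x₀ + z) = -(c1 * x₀ (iu e) + c2 * x₀ (iv e)) + (c1 * z (iu e) + c2 * z (iv e)) := by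
        rw [map_add, map_neg]; rfl
      rw [hlz]
      constructor <;> intro hh <;> linarith
    rw [hSeq, measure_preimage_add]
    exact hker0

def CL1 : E e →L[ℝ] E e := LinearMap.toContinuousLinearMap (Lmat e 2 2 0 (1/2))
def CL2 : E e →L[ℝ] E e := LinearMap.toContinuousLinearMap (Lmat e 0 1 (-1) 0)
def CL4 : E e →L[ℝ] E e := LinearMap.toContinuousLinearMap (Lmat e (1/2) 2 0 2)
def CL5 : E e →L[ℝ] E e := LinearMap.toContinuousLinearMap (Lmat e 1 0 (1/4) 1)

variable (α : ℝ)

def Df (x : E e) : E e →L[ℝ] E e :=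
  if 0 ≤ x (iu e) + 2 * x (iv e) + α then
    (if 2 * x (iu e) + x (iv e) ≤ 0 then CL1 e else CL2 e)
  else (if 0 ≤ x (iu e) - 4 * x (iv e) - 3*α then CL4 e else CL5 e)


theorem absdet_Df (x : E e) : ENNReal.ofReal |(Df e α x).det| = 1 := by
  have h1 : (CL1 e).det = 1 := by
    rw [ContinuousLinearMap.det, CL1, LinearMap.coe_toContinuousLinearMap, det_Lmat_upper]
    norm_num
  have h2 : |(CL2 e).det| = 1 := by
    rw [ContinuousLinearMap.det, CL2, LinearMap.coe_toContinuousLinearMap]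
    exact abs_det_Lmat_rot e
  have h4 : (CL4 e).det = 1 := by
    rw [ContinuousLinearMap.det, CL4, LinearMap.coe_toContinuousLinearMap, det_Lmat_upper]
    norm_num
  have h5 : (CL5 e).det = 1 := by
    rw [ContinuousLinearMap.det, CL5, LinearMap.coe_toContinuousLinearMap, det_Lmat_lower]
    norm_num
  rw [Df]
  split_ifs <;> simp [h1, h2, h4, h5]


-- PART 6 (to be appended; uses earlier defs)
theorem phi_eq_affine1 (y : E e) (h1 : 0 ≤ y (iu e) + 2*y (iv e) + α)
    (h2 : 2*y (iu e) + y (iv e) ≤ 0) :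
    phi e α y = EuclideanSpace.single (iu e) α + CL1 e y := by
  obtain ⟨e1, e2⟩ := F_R1 α (y (iu e)) (y (iv e)) h1 h2
  ext i
  have hCL : (CL1 e y : E e) i = Lmat e 2 2 0 (1/2) y i := by
    rw [CL1, LinearMap.coe_toContinuousLinearMap']
  by_cases hi1 : i = iu e
  · subst hi1
    rw [phi_apply_iu, e1, PiLp.add_apply, hCL, Lmat_apply]
    simp [EuclideanSpace.single_apply]
    try ring
  · by_cases hi2 : i = iv e
    · subst hi2
      rw [phi_apply_iv, e2, PiLp.add_apply, hCL, Lmat_apply]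
      simp [EuclideanSpace.single_apply, hi1, Ne.symm (iu_ne_iv e)]
      try ring
    · rw [phi_apply_ne e α y hi1 hi2, PiLp.add_apply, hCL, Lmat_apply]
      simp [EuclideanSpace.single_apply, hi1, hi2]

theorem phi_eq_affine2 (y : E e) (h1 : 0 ≤ y (iu e) + 2*y (iv e) + α)
    (h2 : 0 ≤ 2*y (iu e) + y (iv e)) :
    phi e α y = EuclideanSpace.single (iu e) α + CL2 e y := by
  obtain ⟨e1, e2⟩ := F_R2 α (y (iu e)) (y (iv e)) h1 h2
  ext i
  have hCL : (CL2 e y : E e) i = Lmat e 0 1 (-1) 0 y i := by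
    rw [CL2, LinearMap.coe_toContinuousLinearMap']
  by_cases hi1 : i = iu e
  · subst hi1
    rw [phi_apply_iu, e1, PiLp.add_apply, hCL, Lmat_apply]
    simp [EuclideanSpace.single_apply]
    try ring
  · by_cases hi2 : i = iv e
    · subst hi2
      rw [phi_apply_iv, e2, PiLp.add_apply, hCL, Lmat_apply]
      simp [EuclideanSpace.single_apply, hi1, Ne.symm (iu_ne_iv e)]
      try ring
    · rw [phi_apply_ne e α y hi1 hi2, PiLp.add_apply, hCL, Lmat_apply]
      simp [EuclideanSpace.single_apply, hi1, hi2]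

theorem phi_eq_affine4 (y : E e) (h1 : y (iu e) + 2*y (iv e) + α ≤ 0)
    (h3 : 0 ≤ y (iu e) - 4*y (iv e) - 3*α) :
    phi e α y = (EuclideanSpace.single (iu e) (3*α/2) + EuclideanSpace.single (iv e) α)
      + CL4 e y := by
  obtain ⟨e1, e2⟩ := F_R4 α (y (iu e)) (y (iv e)) h1 h3
  ext i
  have hCL : (CL4 e y : E e) i = Lmat e (1/2) 2 0 2 y i := by
    rw [CL4, LinearMap.coe_toContinuousLinearMap']
  by_cases hi1 : i = iu e
  · subst hi1
    rw [phi_apply_iu, e1, PiLp.add_apply, PiLp.add_apply, hCL, Lmat_apply]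
    simp [EuclideanSpace.single_apply, iu_ne_iv e]
    try ring
  · by_cases hi2 : i = iv e
    · subst hi2
      rw [phi_apply_iv, e2, PiLp.add_apply, PiLp.add_apply, hCL, Lmat_apply]
      simp [EuclideanSpace.single_apply, hi1, Ne.symm (iu_ne_iv e)]
      try ring
    · rw [phi_apply_ne e α y hi1 hi2, PiLp.add_apply, PiLp.add_apply, hCL, Lmat_apply]
      simp [EuclideanSpace.single_apply, hi1, hi2]

theorem phi_eq_affine5 (y : E e) (h1 : y (iu e) + 2*y (iv e) + α ≤ 0)
    (h3 : y (iu e) - 4*y (iv e) - 3*α ≤ 0) :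
    phi e α y = EuclideanSpace.single (iv e) (α/4) + CL5 e y := by
  obtain ⟨e1, e2⟩ := F_R5 α (y (iu e)) (y (iv e)) h1 h3
  ext i
  have hCL : (CL5 e y : E e) i = Lmat e 1 0 (1/4) 1 y i := by
    rw [CL5, LinearMap.coe_toContinuousLinearMap']
  by_cases hi1 : i = iu e
  · subst hi1
    rw [phi_apply_iu, e1, PiLp.add_apply, hCL, Lmat_apply]
    simp [EuclideanSpace.single_apply, iu_ne_iv e]
  · by_cases hi2 : i = iv e
    · subst hi2
      rw [phi_apply_iv, e2, PiLp.add_apply, hCL, Lmat_apply]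
      simp [EuclideanSpace.single_apply, hi1, Ne.symm (iu_ne_iv e)]
      try ring
    · rw [phi_apply_ne e α y hi1 hi2, PiLp.add_apply, hCL, Lmat_apply]
      simp [EuclideanSpace.single_apply, hi1, hi2]

def Z1 : Set (E e) := {x | x (iu e) + 2 * x (iv e) + α = 0}
def Z2 : Set (E e) := {x | 2 * x (iu e) + x (iv e) = 0}
def Z3 : Set (E e) := {x | x (iu e) - 4 * x (iv e) - 3*α = 0}
def sGood : Set (E e) := (Z1 e α ∪ Z2 e ∪ Z3 e α)ᶜ

theorem cont1 : Continuous fun y : E e => y (iu e) + 2*y (iv e) + α :=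
  ((PiLp.continuous_apply 2 _ (iu e)).add (continuous_const.mul (PiLp.continuous_apply 2 _ (iv e)))).add
    continuous_const

theorem cont2 : Continuous fun y : E e => 2*y (iu e) + y (iv e) :=
  (continuous_const.mul (PiLp.continuous_apply 2 _ (iu e))).add (PiLp.continuous_apply 2 _ (iv e))

theorem cont3 : Continuous fun y : E e => y (iu e) - 4*y (iv e) - 3*α :=
  ((PiLp.continuous_apply 2 _ (iu e)).sub (continuous_const.mul (PiLp.continuous_apply 2 _ (iv e)))).sub
    continuous_const

theorem sGood_meas : MeasurableSet (sGood e α) := by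
  apply MeasurableSet.compl
  refine (MeasurableSet.union (MeasurableSet.union ?_ ?_) ?_)
  · exact (isClosed_eq (cont1 e α) continuous_const).measurableSet
  · exact (isClosed_eq (cont2 e) continuous_const).measurableSet
  · exact (isClosed_eq (cont3 e α) continuous_const).measurableSet

theorem hasfderiv_good :
    ∀ x ∈ sGood e α, HasFDerivWithinAt (phi e α) (Df e α x) (sGood e α) x := by
  intro x hx
  rw [sGood, mem_compl_iff, mem_union, mem_union] at hx
  push_neg at hx
  obtain ⟨⟨hz1, hz2⟩, hz3⟩ := hx
  have hz1' : x (iu e) + 2*x (iv e) + α ≠ 0 := hz1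
  have hz2' : 2*x (iu e) + x (iv e) ≠ 0 := hz2
  have hz3' : x (iu e) - 4*x (iv e) - 3*α ≠ 0 := hz3
  rcases hz1'.lt_or_gt with hc1 | hc1
  · rcases hz3'.lt_or_gt with hc3 | hc3
    · -- region R5
      have hO : IsOpen {y : E e | y (iu e) + 2*y (iv e) + α < 0 ∧ y (iu e) - 4*y (iv e) - 3*α < 0} :=
        (isOpen_lt (cont1 e α) continuous_const).inter (isOpen_lt (cont3 e α) continuous_const)
      have hxO : x ∈ {y : E e | y (iu e) + 2*y (iv e) + α < 0 ∧ y (iu e) - 4*y (iv e) - 3*α < 0} :=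
        ⟨hc1, hc3⟩
      have heq : Set.EqOn (phi e α)
          (fun y => EuclideanSpace.single (iv e) (α/4) + CL5 e y)
          {y : E e | y (iu e) + 2*y (iv e) + α < 0 ∧ y (iu e) - 4*y (iv e) - 3*α < 0} :=
        fun y hy => phi_eq_affine5 e α y (le_of_lt hy.1) (le_of_lt hy.2)
      have hD : HasFDerivAt (fun y => EuclideanSpace.single (iv e) (α/4) + CL5 e y)
          (CL5 e) x := (CL5 e).hasFDerivAt.const_add _
      have hphi : HasFDerivAt (phi e α) (CL5 e) x :=
        hD.congr_of_eventuallyEq (Filter.eventuallyEq_of_mem (hO.mem_nhds hxO) heq)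
      have hDf : Df e α x = CL5 e := by
        rw [Df, if_neg (not_le.mpr hc1), if_neg (not_le.mpr hc3)]
      rw [hDf]; exact hphi.hasFDerivWithinAt
    · -- region R4
      have hO : IsOpen {y : E e | y (iu e) + 2*y (iv e) + α < 0 ∧ 0 < y (iu e) - 4*y (iv e) - 3*α} :=
        (isOpen_lt (cont1 e α) continuous_const).inter (isOpen_lt continuous_const (cont3 e α))
      have hxO : x ∈ {y : E e | y (iu e) + 2*y (iv e) + α < 0 ∧ 0 < y (iu e) - 4*y (iv e) - 3*α} :=
        ⟨hc1, hc3⟩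
      have heq : Set.EqOn (phi e α)
          (fun y => (EuclideanSpace.single (iu e) (3*α/2) + EuclideanSpace.single (iv e) α) + CL4 e y)
          {y : E e | y (iu e) + 2*y (iv e) + α < 0 ∧ 0 < y (iu e) - 4*y (iv e) - 3*α} :=
        fun y hy => phi_eq_affine4 e α y (le_of_lt hy.1) (le_of_lt hy.2)
      have hD : HasFDerivAt (fun y =>
          (EuclideanSpace.single (iu e) (3*α/2) + EuclideanSpace.single (iv e) α) + CL4 e y)
          (CL4 e) x := (CL4 e).hasFDerivAt.const_add _
      have hphi : HasFDerivAt (phi e α) (CL4 e) x :=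
        hD.congr_of_eventuallyEq (Filter.eventuallyEq_of_mem (hO.mem_nhds hxO) heq)
      have hDf : Df e α x = CL4 e := by
        rw [Df, if_neg (not_le.mpr hc1), if_pos (le_of_lt hc3)]
      rw [hDf]; exact hphi.hasFDerivWithinAt
  · rcases hz2'.lt_or_gt with hc2 | hc2
    · -- region R1
      have hO : IsOpen {y : E e | 0 < y (iu e) + 2*y (iv e) + α ∧ 2*y (iu e) + y (iv e) < 0} :=
        (isOpen_lt continuous_const (cont1 e α)).inter (isOpen_lt (cont2 e) continuous_const)
      have hxO : x ∈ {y : E e | 0 < y (iu e) + 2*y (iv e) + α ∧ 2*y (iu e) + y (iv e) < 0} :=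
        ⟨hc1, hc2⟩
      have heq : Set.EqOn (phi e α)
          (fun y => EuclideanSpace.single (iu e) α + CL1 e y)
          {y : E e | 0 < y (iu e) + 2*y (iv e) + α ∧ 2*y (iu e) + y (iv e) < 0} :=
        fun y hy => phi_eq_affine1 e α y (le_of_lt hy.1) (le_of_lt hy.2)
      have hD : HasFDerivAt (fun y => EuclideanSpace.single (iu e) α + CL1 e y)
          (CL1 e) x := (CL1 e).hasFDerivAt.const_add _
      have hphi : HasFDerivAt (phi e α) (CL1 e) x :=
        hD.congr_of_eventuallyEq (Filter.eventuallyEq_of_mem (hO.mem_nhds hxO) heq)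
      have hDf : Df e α x = CL1 e := by
        rw [Df, if_pos (le_of_lt hc1), if_pos (le_of_lt hc2)]
      rw [hDf]; exact hphi.hasFDerivWithinAt
    · -- region R2
      have hO : IsOpen {y : E e | 0 < y (iu e) + 2*y (iv e) + α ∧ 0 < 2*y (iu e) + y (iv e)} :=
        (isOpen_lt continuous_const (cont1 e α)).inter (isOpen_lt continuous_const (cont2 e))
      have hxO : x ∈ {y : E e | 0 < y (iu e) + 2*y (iv e) + α ∧ 0 < 2*y (iu e) + y (iv e)} :=
        ⟨hc1, hc2⟩
      have heq : Set.EqOn (phi e α)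
          (fun y => EuclideanSpace.single (iu e) α + CL2 e y)
          {y : E e | 0 < y (iu e) + 2*y (iv e) + α ∧ 0 < 2*y (iu e) + y (iv e)} :=
        fun y hy => phi_eq_affine2 e α y (le_of_lt hy.1) (le_of_lt hy.2)
      have hD : HasFDerivAt (fun y => EuclideanSpace.single (iu e) α + CL2 e y)
          (CL2 e) x := (CL2 e).hasFDerivAt.const_add _
      have hphi : HasFDerivAt (phi e α) (CL2 e) x :=
        hD.congr_of_eventuallyEq (Filter.eventuallyEq_of_mem (hO.mem_nhds hxO) heq)
      have hDf : Df e α x = CL2 e := by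
        rw [Df, if_pos (le_of_lt hc1), if_neg (not_le.mpr hc2)]
      rw [hDf]; exact hphi.hasFDerivWithinAt

-- PART 7
def Wbad : Set (E e) :=
  {x : E e | 1*x (iu e) + 4*x (iv e) = -α} ∪ {x : E e | 1*x (iu e) + (-2)*x (iv e) = α} ∪
  {x : E e | 1*x (iu e) + (-20)*x (iv e) = 7*α} ∪ {x : E e | 2*x (iu e) + (-1)*x (iv e) = α} ∪
  {x : E e | 4*x (iu e) + 1*x (iv e) = α} ∪ {x : E e | 8*x (iu e) + (-7)*x (iv e) = 5*α} ∪
  {x : E e | 7*x (iu e) + 4*x (iv e) = α}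

theorem Wbad_null : volume (Wbad e α) = 0 := by
  rw [Wbad]
  refine measure_union_null (measure_union_null (measure_union_null (measure_union_null
    (measure_union_null (measure_union_null ?_ ?_) ?_) ?_) ?_) ?_) ?_ <;>
  · apply line_null
    norm_num

theorem mW1 (z : E e) (h : 1*z (iu e) + 4*z (iv e) = -α) : z ∈ Wbad e α := by
  left; left; left; left; left; left; exact h
theorem mW2 (z : E e) (h : 1*z (iu e) + (-2)*z (iv e) = α) : z ∈ Wbad e α := by
  left; left; left; left; left; right; exact h
theorem mW3 (z : E e) (h : 1*z (iu e) + (-20)*z (iv e) = 7*α) : z ∈ Wbad e α := by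
  left; left; left; left; right; exact h
theorem mW4 (z : E e) (h : 2*z (iu e) + (-1)*z (iv e) = α) : z ∈ Wbad e α := by
  left; left; left; right; exact h
theorem mW5 (z : E e) (h : 4*z (iu e) + 1*z (iv e) = α) : z ∈ Wbad e α := by
  left; left; right; exact h
theorem mW6 (z : E e) (h : 8*z (iu e) + (-7)*z (iv e) = 5*α) : z ∈ Wbad e α := by
  left; right; exact h
theorem mW7 (z : E e) (h : 7*z (iu e) + 4*z (iv e) = α) : z ∈ Wbad e α := by
  right; exact h

theorem image_bad : phi e α '' (Z1 e α ∪ Z2 e ∪ Z3 e α) ⊆ Wbad e α := by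
  rintro y ⟨x, hx, rfl⟩
  rcases le_total 0 (x (iu e) + 2*x (iv e) + α) with h1 | h1
  · rcases le_total (2*x (iu e) + x (iv e)) 0 with h2 | h2
    · obtain ⟨e1, e2⟩ := F_R1 α (x (iu e)) (x (iv e)) h1 h2
      have hu : phi e α x (iu e) = 2*x (iu e) + 2*x (iv e) + α := (phi_apply_iu e α x).trans e1
      have hv : phi e α x (iv e) = x (iv e) / 2 := (phi_apply_iv e α x).trans e2
      rcases hx with (hx | hx) | hx
      · exact mW1 e α _ (by rw [hu, hv]; have hxx : x (iu e) + 2*x (iv e) + α = 0 := hx; linarith)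
      · exact mW2 e α _ (by rw [hu, hv]; have hxx : 2*x (iu e) + x (iv e) = 0 := hx; linarith)
      · exact mW3 e α _ (by rw [hu, hv]; have hxx : x (iu e) - 4*x (iv e) - 3*α = 0 := hx; linarith)
    · obtain ⟨e1, e2⟩ := F_R2 α (x (iu e)) (x (iv e)) h1 h2
      have hu : phi e α x (iu e) = x (iv e) + α := (phi_apply_iu e α x).trans e1
      have hv : phi e α x (iv e) = -x (iu e) := (phi_apply_iv e α x).trans e2
      rcases hx with (hx | hx) | hx
      · exact mW4 e α _ (by rw [hu, hv]; have hxx : x (iu e) + 2*x (iv e) + α = 0 := hx; linarith)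
      · exact mW2 e α _ (by rw [hu, hv]; have hxx : 2*x (iu e) + x (iv e) = 0 := hx; linarith)
      · exact mW5 e α _ (by rw [hu, hv]; have hxx : x (iu e) - 4*x (iv e) - 3*α = 0 := hx; linarith)
  · rcases le_total 0 (x (iu e) - 4*x (iv e) - 3*α) with h3 | h3
    · obtain ⟨e1, e2⟩ := F_R4 α (x (iu e)) (x (iv e)) h1 h3
      have hu : phi e α x (iu e) = x (iu e)/2 + 2*x (iv e) + 3*α/2 := (phi_apply_iu e α x).trans e1
      have hv : phi e α x (iv e) = 2*x (iv e) + α := (phi_apply_iv e α x).trans e2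
      rcases hx with (hx | hx) | hx
      · exact mW4 e α _ (by rw [hu, hv]; have hxx : x (iu e) + 2*x (iv e) + α = 0 := hx; linarith)
      · exact mW6 e α _ (by rw [hu, hv]; have hxx : 2*x (iu e) + x (iv e) = 0 := hx; linarith)
      · exact mW2 e α _ (by rw [hu, hv]; have hxx : x (iu e) - 4*x (iv e) - 3*α = 0 := hx; linarith)
    · obtain ⟨e1, e2⟩ := F_R5 α (x (iu e)) (x (iv e)) h1 h3
      have hu : phi e α x (iu e) = x (iu e) := (phi_apply_iu e α x).trans e1
      have hv : phi e α x (iv e) = x (iu e)/4 + x (iv e) + α/4 := (phi_apply_iv e α x).trans e2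
      rcases hx with (hx | hx) | hx
      · exact mW1 e α _ (by rw [hu, hv]; have hxx : x (iu e) + 2*x (iv e) + α = 0 := hx; linarith)
      · exact mW7 e α _ (by rw [hu, hv]; have hxx : 2*x (iu e) + x (iv e) = 0 := hx; linarith)
      · exact mW2 e α _ (by rw [hu, hv]; have hxx : x (iu e) - 4*x (iv e) - 3*α = 0 := hx; linarith)

theorem phi_bijective : Function.Bijective (phi e α) :=
  Function.bijective_iff_has_inverse.mpr ⟨psi e α, psi_phi e α, phi_psi e α⟩

theorem Zbad_null : volume (Z1 e α ∪ Z2 e ∪ Z3 e α) = 0 := by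
  have hz1 : volume (Z1 e α) = 0 := by
    have : Z1 e α = {x : E e | 1 * x (iu e) + 2 * x (iv e) = -α} := by
      ext x; simp only [Z1, mem_setOf_eq]; constructor <;> intro <;> linarith
    rw [this]; exact line_null e 1 2 (-α) (by norm_num)
  have hz2 : volume (Z2 e) = 0 := by
    have : Z2 e = {x : E e | 2 * x (iu e) + 1 * x (iv e) = 0} := by
      ext x; simp only [Z2, mem_setOf_eq]; constructor <;> intro <;> linarith
    rw [this]; exact line_null e 2 1 0 (by norm_num)
  have hz3 : volume (Z3 e α) = 0 := by
    have : Z3 e α = {x : E e | 1 * x (iu e) + (-4) * x (iv e) = 3*α} := by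
      ext x; simp only [Z3, mem_setOf_eq]; constructor <;> intro <;> linarith
    rw [this]; exact line_null e 1 (-4) (3*α) (by norm_num)
  exact measure_union_null (measure_union_null hz1 hz2) hz3

theorem phi_map_volume : Measure.map (phi e α) volume = volume := by
  have hmeas : Measurable (phi e α) := (phi_lipschitz e α).continuous.measurable
  have hinj : Set.InjOn (phi e α) (sGood e α) := (phi_bijective e α).injective.injOn
  have H := map_withDensity_abs_det_fderiv_eq_addHaar volume (sGood_meas e α).nullMeasurableSet
    (hasfderiv_good e α) hinj
  have hdens : (fun x => ENNReal.ofReal (abs (Df e α x).det)) = fun _ : E e => (1:ENNReal) :=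
    funext (absdet_Df e α)
  rw [hdens, show (fun _ : E e => (1:ENNReal)) = 1 from rfl, withDensity_one] at H
  have hae1 : volume.restrict (sGood e α) = volume := by
    apply Measure.restrict_eq_self_of_ae_mem
    rw [ae_iff]
    have : {x : E e | x ∉ sGood e α} = Z1 e α ∪ Z2 e ∪ Z3 e α := by
      ext x
      simp only [sGood, mem_setOf_eq, mem_compl_iff, not_not]
    rw [this]; exact Zbad_null e α
  have himg : volume ((phi e α '' sGood e α)ᶜ) = 0 := by
    rw [← Set.image_compl_eq (phi_bijective e α)]
    refine measure_mono_null ?_ (Wbad_null e α)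
    rw [sGood, compl_compl]
    exact image_bad e α
  have hae2 : volume.restrict (phi e α '' sGood e α) = volume := by
    apply Measure.restrict_eq_self_of_ae_mem
    rw [ae_iff]
    have : {x : E e | x ∉ phi e α '' sGood e α} = (phi e α '' sGood e α)ᶜ := rfl
    rw [this]; exact himg
  rw [hae1] at H
  rw [H, hae2]

theorem phi_measurePreserving : MeasurePreserving (phi e α) volume volume :=
  ⟨(phi_lipschitz e α).continuous.measurable, phi_map_volume e α⟩

/-! ### membership characterization -/

theorem mem_key (hα : 0 < α) (x : E e) :
    ((∀ i, |x i| < α) ∧ (x (iv e) < 0 ∨ (x (iv e) = 0 ∧ x (iu e) < 0))) ↔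
      ((∀ i, |phi e α x i| < α) ∧ (phi e α x (iv e) < 0 ∨ phi e α x (iv e) = 0)) := by
  have h2d := key2d hα (x (iu e)) (x (iv e))
  constructor
  · rintro ⟨hall, hsign⟩
    obtain ⟨hf1, hf2, hf3⟩ := h2d.mp ⟨hall _, hall _, hsign⟩
    refine ⟨fun i => ?_, ?_⟩
    · by_cases hi1 : i = iu e
      · subst hi1; rw [phi_apply_iu]; exact hf1
      · by_cases hi2 : i = iv e
        · subst hi2; rw [phi_apply_iv]; exact hf2
        · rw [phi_apply_ne e α x hi1 hi2]; exact hall i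
    · rw [phi_apply_iv]; exact lt_or_eq_of_le hf3
  · rintro ⟨hall, hsign⟩
    have h1 : |F1 α (x (iu e)) (x (iv e))| < α := by
      have := hall (iu e); rwa [phi_apply_iu] at this
    have h2 : |F2 α (x (iu e)) (x (iv e))| < α := by
      have := hall (iv e); rwa [phi_apply_iv] at this
    have h3 : F2 α (x (iu e)) (x (iv e)) ≤ 0 := by
      rw [phi_apply_iv] at hsign
      rcases hsign with h | h
      · exact le_of_lt h
      · exact le_of_eq h
    obtain ⟨g1, g2, g3⟩ := h2d.mpr ⟨h1, h2, h3⟩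
    refine ⟨fun i => ?_, g3⟩
    by_cases hi1 : i = iu e
    · subst hi1; exact g1
    · by_cases hi2 : i = iv e
      · subst hi2; exact g2
      · have := hall i; rwa [phi_apply_ne e α x hi1 hi2] at this

theorem smul_abs_iff (hα : 0 < α) (t : ℝ) : |α⁻¹ * t| < 1 ↔ |t| < α := by
  rw [abs_mul, abs_inv, abs_of_pos hα, inv_mul_eq_div, div_lt_one hα]

theorem smul_neg_iff (hα : 0 < α) (t : ℝ) : α⁻¹ * t < 0 ↔ t < 0 := by
  constructor
  · intro h
    by_contra h'
    exact absurd (mul_nonneg (le_of_lt (inv_pos.mpr hα)) (not_lt.mp h')) (not_le.mpr h)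
  · exact fun h => mul_neg_of_pos_of_neg (inv_pos.mpr hα) h

theorem smul_zero_iff (hα : 0 < α) (t : ℝ) : α⁻¹ * t = 0 ↔ t = 0 := by
  constructor
  · intro h
    rcases mul_eq_zero.mp h with h' | h'
    · exact absurd h' (inv_ne_zero (ne_of_gt hα))
    · exact h'
  · intro h; rw [h, mul_zero]

theorem smul_charA (hα : 0 < α) :
    α • (({x : E e | ∀ i, |x i| < 1} ∩ {x : E e | x (iv e) < 0}) ∪
      (({x : E e | ∀ i, |x i| < 1} ∩ {x : E e | x (iv e) = 0}) ∩ {x : E e | x (iu e) < 0})) =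
    {x : E e | (∀ i, |x i| < α) ∧ (x (iv e) < 0 ∨ (x (iv e) = 0 ∧ x (iu e) < 0))} := by
  ext z
  rw [mem_smul_set_iff_inv_smul_mem₀ (ne_of_gt hα)]
  simp only [mem_union, mem_inter_iff, mem_setOf_eq, PiLp.smul_apply, smul_eq_mul,
    smul_abs_iff α hα, smul_neg_iff α hα, smul_zero_iff α hα]
  constructor
  · rintro (⟨h1, h2⟩ | ⟨⟨h1, h2⟩, h3⟩)
    · exact ⟨h1, Or.inl h2⟩
    · exact ⟨h1, Or.inr ⟨h2, h3⟩⟩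
  · rintro ⟨h1, h2 | ⟨h2, h3⟩⟩
    · exact Or.inl ⟨h1, h2⟩
    · exact Or.inr ⟨⟨h1, h2⟩, h3⟩

theorem smul_charB (hα : 0 < α) :
    α • (({x : E e | ∀ i, |x i| < 1} ∩ {x : E e | x (iv e) < 0}) ∪
      ({x : E e | ∀ i, |x i| < 1} ∩ {x : E e | x (iv e) = 0})) =
    {x : E e | (∀ i, |x i| < α) ∧ (x (iv e) < 0 ∨ x (iv e) = 0)} := by
  ext z
  rw [mem_smul_set_iff_inv_smul_mem₀ (ne_of_gt hα)]
  simp only [mem_union, mem_inter_iff, mem_setOf_eq, PiLp.smul_apply, smul_eq_mul,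
    smul_abs_iff α hα, smul_neg_iff α hα, smul_zero_iff α hα]
  constructor
  · rintro (⟨h1, h2⟩ | ⟨h1, h2⟩)
    · exact ⟨h1, Or.inl h2⟩
    · exact ⟨h1, Or.inr h2⟩
  · rintro ⟨h1, h2 | h2⟩
    · exact Or.inl ⟨h1, h2⟩
    · exact Or.inr ⟨h1, h2⟩

theorem final_image (hα : 0 < α) :
    phi e α '' (α • (({x : E e | ∀ i, |x i| < 1} ∩ {x : E e | x (iv e) < 0}) ∪
      (({x : E e | ∀ i, |x i| < 1} ∩ {x : E e | x (iv e) = 0}) ∩ {x : E e | x (iu e) < 0}))) =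
    α • (({x : E e | ∀ i, |x i| < 1} ∩ {x : E e | x (iv e) < 0}) ∪
      ({x : E e | ∀ i, |x i| < 1} ∩ {x : E e | x (iv e) = 0})) := by
  rw [smul_charA e α hα, smul_charB e α hα]
  ext y
  constructor
  · rintro ⟨x, hx, rfl⟩
    exact (mem_key e α hα x).mp hx
  · intro hy
    refine ⟨psi e α y, ?_, phi_psi e α y⟩
    apply (mem_key e α hα (psi e α y)).mpr
    rw [phi_psi e α y]
    exact hy


end HalfCubeAux

/-- For every `d ≥ 2` and every `α > 0` there exists a volume-preserving
bi-Lipschitz mapping `φ : ℝ^d → ℝ^d` mapping `α(K_- ∪ Σ₀)` onto `α(K_- ∪ Σ)`, where `K` is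
the open unit cube of `ℝ^d`, `K_-` its lower half `K ∩ {x_d < 0}`, `Σ = K ∩ {x_d = 0}` the
upper plate of `K_-` and `Σ₀ = Σ ∩ {x_{d-1} < 0}` its left half. -/
theorem exists_volumePreserving_biLipschitz_mapping_halfCube
    (d : ℕ) (hd : 2 ≤ d) (α : ℝ) (hα : 0 < α) :
    ∃ (φ : EuclideanSpace ℝ (Fin d) → EuclideanSpace ℝ (Fin d)) (K : NNReal),
      LipschitzWith K φ ∧ AntilipschitzWith K φ ∧ Function.Surjective φ ∧
      MeasurePreserving φ volume volume ∧
      φ '' (α • (({x : EuclideanSpace ℝ (Fin d) | ∀ i, |x i| < 1} ∩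
            {x | x ⟨d - 1, by omega⟩ < 0}) ∪
          (({x | ∀ i, |x i| < 1} ∩ {x | x ⟨d - 1, by omega⟩ = 0}) ∩
            {x | x ⟨d - 2, by omega⟩ < 0}))) =
        α • (({x : EuclideanSpace ℝ (Fin d) | ∀ i, |x i| < 1} ∩
            {x | x ⟨d - 1, by omega⟩ < 0}) ∪
          ({x | ∀ i, |x i| < 1} ∩ {x | x ⟨d - 1, by omega⟩ = 0})) := by
  obtain ⟨e, rfl⟩ : ∃ e, d = e + 2 := ⟨d - 2, by omega⟩
  exact ⟨HalfCubeAux.phi e α, 4, HalfCubeAux.phi_lipschitz e α,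
    (HalfCubeAux.psi_lipschitz e α).to_rightInverse (HalfCubeAux.psi_phi e α),
    fun y => ⟨HalfCubeAux.psi e α y, HalfCubeAux.phi_psi e α y⟩,
    HalfCubeAux.phi_measurePreserving e α,
    HalfCubeAux.final_image e α hα⟩
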